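/- In the universal enveloping algebra U(L𝔤) of the loop algebra L𝔤 = 𝔤 ⊗ ℂ[t, t⁻¹], the following hold: [a, E₁₀⊗1] = 3(E₃₁⊗t⁻¹); [b, E₁₀⊗1] = 2(E₃₁⊗t⁻¹)(E₂₁⊗t⁻¹); [c, E₁₀⊗1] = (E₃₂⊗t⁻¹)(E₃₁⊗t⁻¹)(E₁₀⊗t⁻¹) − (E₃₁⊗t⁻¹)²(E₁₁⊗t⁻¹); [u, E₁₀⊗1] = [v, E₁₀⊗1] = [w, E₁₀⊗1] = 0; and each of the elements a, b, c, u, v, w commutes with E₀₁⊗1. -/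

import Mathlib

/-- The canonical embedding of a Lie algebra into its universal enveloping algebra. -/
noncomputable def ιU {L : Type*} [LieRing L] [LieAlgebra ℂ L] (x : L) :
    UniversalEnvelopingAlgebra ℂ L :=
  UniversalEnvelopingAlgebra.ι ℂ x

/-- The adjoint action `X_L : f ↦ Xf − fX` of `X ∈ L` on `U(L)`. -/
noncomputable def adU {L : Type*} [LieRing L] [LieAlgebra ℂ L] (x : L)
    (f : UniversalEnvelopingAlgebra ℂ L) : UniversalEnvelopingAlgebra ℂ L :=
  ιU x * f - f * ιU x

/-- A Lie algebra over `ℂ` equipped with Chevalley generators of type `G₂`: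
`E₁₀, F₁₀, H₁₀` correspond to the short simple root `α` and `E₀₁, F₀₁, H₀₁` to the long
simple root `β`, subject to the Chevalley relations and the Serre relations, and the
generators generate the Lie algebra.  (By Serre's theorem such a Lie algebra is a quotient of
the simple Lie algebra of type `G₂`.) -/
structure G2Gens (L : Type*) [LieRing L] [LieAlgebra ℂ L] where
  E10 : L
  E01 : L
  F10 : L
  F01 : L
  H10 : L
  H01 : L
  hH10H01 : ⁅H10, H01⁆ = 0
  hE10F10 : ⁅E10, F10⁆ = H10
  hE01F01 : ⁅E01, F01⁆ = H01
  hE10F01 : ⁅E10, F01⁆ = 0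
  hE01F10 : ⁅E01, F10⁆ = 0
  hH10E10 : ⁅H10, E10⁆ = (2 : ℂ) • E10
  hH01E01 : ⁅H01, E01⁆ = (2 : ℂ) • E01
  hH10E01 : ⁅H10, E01⁆ = (-3 : ℂ) • E01
  hH01E10 : ⁅H01, E10⁆ = (-1 : ℂ) • E10
  hH10F10 : ⁅H10, F10⁆ = (-2 : ℂ) • F10
  hH01F01 : ⁅H01, F01⁆ = (-2 : ℂ) • F01
  hH10F01 : ⁅H10, F01⁆ = (3 : ℂ) • F01
  hH01F10 : ⁅H01, F10⁆ = (1 : ℂ) • F10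
  serreE1 : ⁅E10, ⁅E10, ⁅E10, ⁅E10, E01⁆⁆⁆⁆ = 0
  serreE2 : ⁅E01, ⁅E01, E10⁆⁆ = 0
  serreF1 : ⁅F10, ⁅F10, ⁅F10, ⁅F10, F01⁆⁆⁆⁆ = 0
  serreF2 : ⁅F01, ⁅F01, F10⁆⁆ = 0
  generates : LieSubalgebra.lieSpan ℂ L {E10, E01, F10, F01, H10, H01} = ⊤

namespace G2Gens

variable {L : Type*} [LieRing L] [LieAlgebra ℂ L] (g : G2Gens L)

/-- The root vector `E₁₁ = [E₁₀, E₀₁]`. -/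
def E11 : L := ⁅g.E10, g.E01⁆
/-- The root vector `E₂₁ = (1/2)[E₁₁, E₁₀]`. -/
noncomputable def E21 : L := (2 : ℂ)⁻¹ • ⁅g.E11, g.E10⁆
/-- The root vector `E₃₁ = (1/3)[E₂₁, E₁₀]`. -/
noncomputable def E31 : L := (3 : ℂ)⁻¹ • ⁅g.E21, g.E10⁆
/-- The root vector `E₃₂ = [E₃₁, E₀₁]`. -/
noncomputable def E32 : L := ⁅g.E31, g.E01⁆
/-- The root vector `F₁₁ = [F₀₁, F₁₀]`. -/
def F11 : L := ⁅g.F01, g.F10⁆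
/-- The root vector `F₂₁ = (1/2)[F₁₀, F₁₁]`. -/
noncomputable def F21 : L := (2 : ℂ)⁻¹ • ⁅g.F10, g.F11⁆
/-- The root vector `F₃₁ = (1/3)[F₁₀, F₂₁]`. -/
noncomputable def F31 : L := (3 : ℂ)⁻¹ • ⁅g.F10, g.F21⁆
/-- The root vector `F₃₂ = [F₀₁, F₃₁]`. -/
noncomputable def F32 : L := ⁅g.F01, g.F31⁆
/-- The coroot `H₁₁ = H₁₀ + 3H₀₁`. -/
def H11 : L := g.H10 + (3 : ℂ) • g.H01
/-- The coroot `H₂₁ = 2H₁₀ + 3H₀₁`. -/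
def H21 : L := (2 : ℂ) • g.H10 + (3 : ℂ) • g.H01
/-- The coroot `H₃₁ = H₁₀ + H₀₁`. -/
def H31 : L := g.H10 + g.H01
/-- The coroot `H₃₂ = H₁₀ + 2H₀₁`. -/
def H32 : L := g.H10 + (2 : ℂ) • g.H01

/-- The element `a = E₂₁` of `U(𝔤)`. -/
noncomputable def aU : UniversalEnvelopingAlgebra ℂ L := ιU g.E21
/-- The element `b = E₃₁E₁₁ − E₃₂E₁₀` of `U(𝔤)`. -/
noncomputable def bU : UniversalEnvelopingAlgebra ℂ L :=
  ιU g.E31 * ιU g.E11 - ιU g.E32 * ιU g.E10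
/-- The element `c = E₃₁²E₀₁ − E₃₂E₃₁H₀₁ − E₃₂²F₀₁` of `U(𝔤)`. -/
noncomputable def cU : UniversalEnvelopingAlgebra ℂ L :=
  ιU g.E31 * ιU g.E31 * ιU g.E01 - ιU g.E32 * ιU g.E31 * ιU g.H01
    - ιU g.E32 * ιU g.E32 * ιU g.F01
/-- The element `u = (1/3)a² − b` of `U(𝔤)`. -/
noncomputable def uU : UniversalEnvelopingAlgebra ℂ L :=
  (3 : ℂ)⁻¹ • (g.aU * g.aU) - g.bU
/-- The element `v = (2/9)a³ − ab − 3c` of `U(𝔤)`. -/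
noncomputable def vU : UniversalEnvelopingAlgebra ℂ L :=
  ((2 : ℂ) / 9) • (g.aU * g.aU * g.aU) - g.aU * g.bU - (3 : ℂ) • g.cU

/-- `f ≡ h (mod U(𝔤)𝔫₊)`:  `f − h` lies in the left ideal of `U(𝔤)` generated by `E₁₀`
and `E₀₁`. -/
def EqModN (f h : UniversalEnvelopingAlgebra ℂ L) : Prop :=
  ∃ A B : UniversalEnvelopingAlgebra ℂ L, f - h = A * ιU g.E10 + B * ιU g.E01

end G2Gens

open scoped TensorProduct

/-- The loop algebra `𝔤 ⊗ ℂ[t,t⁻¹]` (realised as `ℂ[t,t⁻¹] ⊗ 𝔤`) is a Lie algebra over `ℂ`. -/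
noncomputable instance loopLieAlgebra {L : Type*} [LieRing L] [LieAlgebra ℂ L] :
    LieAlgebra ℂ (LaurentPolynomial ℂ ⊗[ℂ] L) where
  lie_smul c x y := by
    have h : c • y = (algebraMap ℂ (LaurentPolynomial ℂ) c) • y :=
      algebra_compatible_smul _ c y
    rw [h, lie_smul (algebraMap ℂ (LaurentPolynomial ℂ) c) x y, ← algebra_compatible_smul]

/-- The image of `x ⊗ tⁿ` in the universal enveloping algebra of the loop algebra. -/
noncomputable def lT {L : Type*} [LieRing L] [LieAlgebra ℂ L] (n : ℤ) (x : L) :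
    UniversalEnvelopingAlgebra ℂ (LaurentPolynomial ℂ ⊗[ℂ] L) :=
  ιU ((LaurentPolynomial.T n : LaurentPolynomial ℂ) ⊗ₜ[ℂ] x)

namespace G2Gens

variable {L : Type*} [LieRing L] [LieAlgebra ℂ L] (g : G2Gens L)

/-- The element `a = E₂₁(−1)` of `U(L𝔤)`. -/
noncomputable def la : UniversalEnvelopingAlgebra ℂ (LaurentPolynomial ℂ ⊗[ℂ] L) :=
  lT (-1) g.E21
/-- The element `b = E₃₁(−1)E₁₁(−1) − E₃₂(−1)E₁₀(−1)` of `U(L𝔤)`. -/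
noncomputable def lb : UniversalEnvelopingAlgebra ℂ (LaurentPolynomial ℂ ⊗[ℂ] L) :=
  lT (-1) g.E31 * lT (-1) g.E11 - lT (-1) g.E32 * lT (-1) g.E10
/-- The element `c = E₃₁(−1)²E₀₁(−1) − E₃₂(−1)E₃₁(−1)H₀₁(−1) − E₃₂(−1)²F₀₁(−1)` of `U(L𝔤)`. -/
noncomputable def lc : UniversalEnvelopingAlgebra ℂ (LaurentPolynomial ℂ ⊗[ℂ] L) :=
  lT (-1) g.E31 * lT (-1) g.E31 * lT (-1) g.E01
    - lT (-1) g.E32 * lT (-1) g.E31 * lT (-1) g.H01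
    - lT (-1) g.E32 * lT (-1) g.E32 * lT (-1) g.F01
/-- The element `w = E₃₁(−1)E₃₂(−2) − E₃₂(−1)E₃₁(−2)` of `U(L𝔤)`. -/
noncomputable def lw : UniversalEnvelopingAlgebra ℂ (LaurentPolynomial ℂ ⊗[ℂ] L) :=
  lT (-1) g.E31 * lT (-2) g.E32 - lT (-1) g.E32 * lT (-2) g.E31
/-- The element `u = (1/3)a² − b` of `U(L𝔤)`. -/
noncomputable def lu : UniversalEnvelopingAlgebra ℂ (LaurentPolynomial ℂ ⊗[ℂ] L) :=
  (3 : ℂ)⁻¹ • (g.la * g.la) - g.lb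
/-- The element `v = (2/9)a³ − ab − 3c` of `U(L𝔤)`. -/
noncomputable def lv : UniversalEnvelopingAlgebra ℂ (LaurentPolynomial ℂ ⊗[ℂ] L) :=
  ((2 : ℂ) / 9) • (g.la * g.la * g.la) - g.la * g.lb - (3 : ℂ) • g.lc

attribute [local instance] LieRing.ofAssociativeRing

section InfraAux

private lemma smul_cancel' {M : Type*} [AddCommGroup M] [Module ℂ M] {c : ℂ} (hc : c ≠ 0)
    {x : M} (h : c • x = 0) : x = 0 := by
  have h2 := congrArg (fun z => c⁻¹ • z) h
  simpa [smul_smul, inv_mul_cancel₀ hc] using h2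

private lemma ring_mul_lie {U : Type*} [Ring U] (a b x : U) :
    ⁅a * b, x⁆ = a * ⁅b, x⁆ + ⁅a, x⁆ * b := by
  simp only [Ring.lie_def]; noncomm_ring

private lemma swapR {U : Type*} [Ring U] {p q : U} (h : p * q = q * p) (z : U) :
    p * (q * z) = q * (p * z) := by rw [← mul_assoc, h, mul_assoc]

end InfraAux

section LieRels

variable {L : Type*} [LieRing L] [LieAlgebra ℂ L] (g : G2Gens L)

lemma brE10E01 : ⁅g.E10, g.E01⁆ = g.E11 := rfl

lemma brE01E10 : ⁅g.E01, g.E10⁆ = -g.E11 := by rw [← lie_skew, brE10E01]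

lemma brE11E10 : ⁅g.E11, g.E10⁆ = (2 : ℂ) • g.E21 := by
  rw [E21, smul_smul]; norm_num

lemma brE21E10 : ⁅g.E21, g.E10⁆ = (3 : ℂ) • g.E31 := by
  rw [E31, smul_smul]; norm_num

lemma brE10E11 : ⁅g.E10, g.E11⁆ = (-2 : ℂ) • g.E21 := by
  rw [← lie_skew, brE11E10, neg_smul]

lemma brE10E21 : ⁅g.E10, g.E21⁆ = (-3 : ℂ) • g.E31 := by
  rw [← lie_skew, brE21E10, neg_smul]

lemma brE31E10 : ⁅g.E31, g.E10⁆ = 0 := by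
  have h := g.serreE1
  rw [brE10E01, brE10E11, lie_smul, brE10E21, smul_smul, lie_smul] at h
  have h6 : ((-2 : ℂ) * -3) • ⁅g.E10, g.E31⁆ = 0 := h
  have := smul_cancel' (by norm_num : ((-2 : ℂ) * -3) ≠ 0) h6
  rw [← lie_skew, this, neg_zero]

lemma brE11E01 : ⁅g.E11, g.E01⁆ = 0 := by
  have h := g.serreE2
  rw [brE01E10, lie_neg, neg_eq_zero] at h
  rw [← lie_skew, h, neg_zero]

lemma brE21E01 : ⁅g.E21, g.E01⁆ = 0 := by
  have h : (2 : ℂ) • ⁅g.E21, g.E01⁆ = 0 := by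
    rw [← smul_lie, ← brE11E10, lie_lie, brE10E01, lie_self, brE11E01, lie_zero, zero_sub,
      neg_zero]
  exact smul_cancel' two_ne_zero h

lemma brE31E01 : ⁅g.E31, g.E01⁆ = g.E32 := rfl

lemma brE21E11 : ⁅g.E21, g.E11⁆ = (3 : ℂ) • g.E32 := by
  have h : ⁅⁅g.E21, g.E10⁆, g.E01⁆ = (3 : ℂ) • g.E32 := by
    rw [brE21E10, smul_lie, brE31E01]
  have h2 : ⁅⁅g.E21, g.E10⁆, g.E01⁆ = ⁅g.E21, g.E11⁆ := by
    rw [lie_lie, brE21E01, lie_zero, sub_zero, brE10E01]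
  exact h2.symm.trans h

lemma brE32E10 : ⁅g.E32, g.E10⁆ = 0 := by
  have hA : ⁅g.E31, g.E11⁆ = -⁅g.E32, g.E10⁆ := by
    rw [show g.E11 = ⁅g.E10, g.E01⁆ from rfl, leibniz_lie, brE31E10, zero_lie, zero_add,
      brE31E01, ← lie_skew]
  have hB : (3 : ℂ) • ⁅g.E31, g.E11⁆ = (3 : ℂ) • ⁅g.E32, g.E10⁆ := by
    rw [← smul_lie, ← brE21E10, lie_lie, brE10E11, lie_smul, lie_self, smul_zero, zero_sub,
      brE21E11, lie_smul, ← lie_skew (x := g.E32), smul_neg]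
  rw [hA, smul_neg, neg_eq_iff_add_eq_zero] at hB
  have h6 : ((3 : ℂ) + 3) • ⁅g.E32, g.E10⁆ = 0 := by rw [add_smul]; exact hB
  exact smul_cancel' (by norm_num : ((3 : ℂ) + 3) ≠ 0) h6

lemma brE31E11 : ⁅g.E31, g.E11⁆ = 0 := by
  have hA : ⁅g.E31, g.E11⁆ = -⁅g.E32, g.E10⁆ := by
    rw [show g.E11 = ⁅g.E10, g.E01⁆ from rfl, leibniz_lie, brE31E10, zero_lie, zero_add,
      brE31E01, ← lie_skew]
  rw [hA, brE32E10, neg_zero]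

lemma brE31E21 : ⁅g.E31, g.E21⁆ = 0 := by
  have h : (2 : ℂ) • ⁅g.E31, g.E21⁆ = 0 := by
    rw [← lie_smul, ← brE11E10, leibniz_lie, brE31E11, zero_lie, zero_add, brE31E10, lie_zero]
  exact smul_cancel' two_ne_zero h

lemma brE21E31 : ⁅g.E21, g.E31⁆ = 0 := by
  rw [← lie_skew, brE31E21, neg_zero]

lemma brE32E01 : ⁅g.E32, g.E01⁆ = 0 := by
  have h : (3 : ℂ) • ⁅g.E32, g.E01⁆ = 0 := by
    rw [← smul_lie, ← brE21E11, lie_lie, brE11E01, lie_zero, brE21E01, lie_zero, sub_zero]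
  exact smul_cancel' three_ne_zero h

lemma brE31E32 : ⁅g.E31, g.E32⁆ = 0 := by
  have h : (3 : ℂ) • ⁅g.E31, g.E32⁆ = 0 := by
    rw [← lie_smul, ← brE21E11, leibniz_lie, brE31E21, zero_lie, zero_add, brE31E11, lie_zero]
  exact smul_cancel' three_ne_zero h

lemma brE32E31 : ⁅g.E32, g.E31⁆ = 0 := by
  rw [← lie_skew, brE31E32, neg_zero]

lemma brF01E10 : ⁅g.F01, g.E10⁆ = 0 := by
  rw [← lie_skew, g.hE10F01, neg_zero]

lemma brF01E01 : ⁅g.F01, g.E01⁆ = -g.H01 := by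
  rw [← lie_skew, g.hE01F01]

end LieRels
section LoopInfra

variable {L : Type*} [LieRing L] [LieAlgebra ℂ L]

lemma lT_lie (m n : ℤ) (x y : L) : ⁅lT m x, lT n y⁆ = lT (m + n) ⁅x, y⁆ := by
  simp only [lT, ιU]
  rw [← LieHom.map_lie]
  congr 1
  rw [LieAlgebra.ExtendScalars.bracket_tmul, ← LaurentPolynomial.T_add]

lemma lT_smul (n : ℤ) (c : ℂ) (x : L) : lT n (c • x) = c • lT n x := by
  simp [lT, ιU, TensorProduct.tmul_smul]

lemma lT_zero (n : ℤ) : lT n (0 : L) = 0 := by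
  simp [lT, ιU, TensorProduct.tmul_zero]

lemma lT_neg (n : ℤ) (x : L) : lT n (-x) = -lT n x := by
  simp [lT, ιU, TensorProduct.tmul_neg]

end LoopInfra
section LoopComms

variable {L : Type*} [LieRing L] [LieAlgebra ℂ L]

lemma lT_mul_comm {m n : ℤ} {x y : L} (h : ⁅x, y⁆ = 0) :
    lT m x * lT n y = lT n y * lT m x := by
  have h2 := lT_lie m n x y
  rw [h, lT_zero, Ring.lie_def, sub_eq_zero] at h2
  exact h2

lemma lT_mul_comm3 {m n : ℤ} {x y : L} (h : ⁅x, y⁆ = 0)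
    (z : UniversalEnvelopingAlgebra ℂ (LaurentPolynomial ℂ ⊗[ℂ] L)) :
    lT m x * (lT n y * z) = lT n y * (lT m x * z) := by
  rw [← mul_assoc, lT_mul_comm h, mul_assoc]

variable (g : G2Gens L)

lemma comm_la_E10 :
    g.la * lT 0 g.E10 - lT 0 g.E10 * g.la = (3 : ℂ) • lT (-1) g.E31 := by
  rw [← Ring.lie_def, la, lT_lie, brE21E10, lT_smul]
  norm_num

lemma comm_lb_E10 :
    g.lb * lT 0 g.E10 - lT 0 g.E10 * g.lb = (2 : ℂ) • (lT (-1) g.E31 * lT (-1) g.E21) := by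
  rw [← Ring.lie_def]
  simp only [lb, sub_lie, ring_mul_lie, lT_lie, brE31E10, brE11E10, brE32E10, lie_self,
    lT_smul, lT_zero, add_zero]
  simp only [mul_smul_comm, smul_mul_assoc, mul_zero, zero_mul, add_zero, zero_add,
    sub_zero, mul_assoc]

lemma comm_lc_E10 :
    g.lc * lT 0 g.E10 - lT 0 g.E10 * g.lc =
      lT (-1) g.E32 * lT (-1) g.E31 * lT (-1) g.E10
        - lT (-1) g.E31 * lT (-1) g.E31 * lT (-1) g.E11 := by
  rw [← Ring.lie_def]
  simp only [lc, sub_lie, ring_mul_lie, lT_lie, brE31E10, brE32E10, brE01E10, g.hH01E10,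
    brF01E10, lT_smul, lT_zero, lT_neg, add_zero]
  simp only [mul_smul_comm, smul_mul_assoc, mul_zero, zero_mul, add_zero, zero_add,
    sub_zero, zero_sub, mul_neg, neg_neg, mul_assoc]
  module

lemma comm_lu_E10 :
    g.lu * lT 0 g.E10 - lT 0 g.E10 * g.lu = 0 := by
  rw [← Ring.lie_def]
  simp only [lu, lb, la, sub_lie, smul_lie, ring_mul_lie, lT_lie, brE21E10, brE31E10,
    brE11E10, brE32E10, lie_self, lT_smul, lT_zero, add_zero]
  simp only [mul_smul_comm, smul_mul_assoc, mul_zero, zero_mul, add_zero, zero_add,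
    sub_zero, mul_assoc, lT_mul_comm (g.brE31E21), lT_mul_comm3 (g.brE31E21)]
  module

lemma comm_lv_E10 :
    g.lv * lT 0 g.E10 - lT 0 g.E10 * g.lv = 0 := by
  rw [← Ring.lie_def]
  simp only [lv, lc, lb, la, sub_lie, smul_lie, ring_mul_lie, lT_lie, brE21E10, brE31E10,
    brE11E10, brE32E10, brE01E10, g.hH01E10, brF01E10, lie_self, lT_smul, lT_zero, lT_neg,
    add_zero]
  simp only [mul_sub, sub_mul, mul_add, add_mul, mul_smul_comm, smul_mul_assoc, mul_zero,
    zero_mul, add_zero, zero_add, sub_zero, zero_sub, mul_neg, neg_neg, mul_assoc,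
    lT_mul_comm (g.brE31E21), lT_mul_comm3 (g.brE31E21),
    lT_mul_comm (g.brE32E31), lT_mul_comm3 (g.brE32E31),
    lT_mul_comm (g.brE31E10), lT_mul_comm3 (g.brE31E10),
    lT_mul_comm (g.brE32E10), lT_mul_comm3 (g.brE32E10),
    lT_mul_comm (g.brE31E11), lT_mul_comm3 (g.brE31E11)]
  module

lemma comm_lw_E10 :
    g.lw * lT 0 g.E10 - lT 0 g.E10 * g.lw = 0 := by
  rw [← Ring.lie_def]
  simp only [lw, sub_lie, ring_mul_lie, lT_lie, brE31E10, brE32E10, lT_zero, add_zero]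
  simp only [mul_zero, zero_mul, add_zero, sub_zero, sub_self]

end LoopComms
section LoopComms2

variable {L : Type*} [LieRing L] [LieAlgebra ℂ L] (g : G2Gens L)

lemma comm_la_E01 : g.la * lT 0 g.E01 = lT 0 g.E01 * g.la := by
  rw [la]; exact lT_mul_comm (g.brE21E01)

lemma comm_lb_E01 : g.lb * lT 0 g.E01 = lT 0 g.E01 * g.lb := by
  rw [← sub_eq_zero, ← Ring.lie_def]
  simp only [lb, sub_lie, ring_mul_lie, lT_lie, brE31E01, brE11E01, brE32E01, brE10E01,
    lT_zero, add_zero]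
  simp only [mul_zero, zero_mul, add_zero, zero_add, sub_zero, sub_self]

lemma comm_lc_E01 : g.lc * lT 0 g.E01 = lT 0 g.E01 * g.lc := by
  rw [← sub_eq_zero, ← Ring.lie_def]
  simp only [lc, sub_lie, ring_mul_lie, lT_lie, brE31E01, brE32E01, lie_self, g.hH01E01,
    brF01E01, lT_smul, lT_zero, lT_neg, add_zero]
  simp only [mul_sub, sub_mul, mul_add, add_mul, mul_smul_comm, smul_mul_assoc, mul_zero,
    zero_mul, add_zero, zero_add, sub_zero, zero_sub, mul_neg, neg_neg, mul_assoc,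
    lT_mul_comm (g.brE32E31), lT_mul_comm3 (g.brE32E31)]
  module

lemma comm_lu_E01 : g.lu * lT 0 g.E01 = lT 0 g.E01 * g.lu := by
  rw [← sub_eq_zero, ← Ring.lie_def]
  simp only [lu, lb, la, sub_lie, smul_lie, ring_mul_lie, lT_lie, brE21E01, brE31E01,
    brE11E01, brE32E01, brE10E01, lT_zero, add_zero]
  simp only [mul_zero, zero_mul, add_zero, zero_add, sub_zero, sub_self, smul_zero]

lemma comm_lv_E01 : g.lv * lT 0 g.E01 = lT 0 g.E01 * g.lv := by
  rw [← sub_eq_zero, ← Ring.lie_def]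
  simp only [lv, lc, lb, la, sub_lie, smul_lie, ring_mul_lie, lT_lie, brE21E01, brE31E01,
    brE11E01, brE32E01, brE10E01, lie_self, g.hH01E01, brF01E01, lT_smul, lT_zero, lT_neg,
    add_zero]
  simp only [mul_sub, sub_mul, mul_add, add_mul, mul_smul_comm, smul_mul_assoc, mul_zero,
    zero_mul, add_zero, zero_add, sub_zero, zero_sub, mul_neg, neg_neg, mul_assoc,
    lT_mul_comm (g.brE32E31), lT_mul_comm3 (g.brE32E31)]
  module

lemma comm_lw_E01 : g.lw * lT 0 g.E01 = lT 0 g.E01 * g.lw := by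
  rw [← sub_eq_zero, ← Ring.lie_def]
  simp only [lw, sub_lie, ring_mul_lie, lT_lie, brE31E01, brE32E01, lT_zero, add_zero]
  simp only [mul_zero, zero_mul, add_zero, zero_add, sub_zero, sub_self,
    lT_mul_comm (g.brE32E31), lT_mul_comm3 (g.brE32E31)]

end LoopComms2
/-- **Lemma A.1 (lem-commute).**  Commutators in `U(L𝔤)` of `a, b, c, u, v, w` with
`E₁₀ ⊗ 1` and `E₀₁ ⊗ 1`. -/
theorem loop_commutator_identities :
    g.la * lT 0 g.E10 - lT 0 g.E10 * g.la = (3 : ℂ) • lT (-1) g.E31 ∧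
    g.lb * lT 0 g.E10 - lT 0 g.E10 * g.lb = (2 : ℂ) • (lT (-1) g.E31 * lT (-1) g.E21) ∧
    g.lc * lT 0 g.E10 - lT 0 g.E10 * g.lc =
      lT (-1) g.E32 * lT (-1) g.E31 * lT (-1) g.E10
        - lT (-1) g.E31 * lT (-1) g.E31 * lT (-1) g.E11 ∧
    g.lu * lT 0 g.E10 - lT 0 g.E10 * g.lu = 0 ∧
    g.lv * lT 0 g.E10 - lT 0 g.E10 * g.lv = 0 ∧
    g.lw * lT 0 g.E10 - lT 0 g.E10 * g.lw = 0 ∧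
    g.la * lT 0 g.E01 = lT 0 g.E01 * g.la ∧
    g.lb * lT 0 g.E01 = lT 0 g.E01 * g.lb ∧
    g.lc * lT 0 g.E01 = lT 0 g.E01 * g.lc ∧
    g.lu * lT 0 g.E01 = lT 0 g.E01 * g.lu ∧
    g.lv * lT 0 g.E01 = lT 0 g.E01 * g.lv ∧
    g.lw * lT 0 g.E01 = lT 0 g.E01 * g.lw := by
  exact ⟨g.comm_la_E10, g.comm_lb_E10, g.comm_lc_E10, g.comm_lu_E10, g.comm_lv_E10,
    g.comm_lw_E10, g.comm_la_E01, g.comm_lb_E01, g.comm_lc_E01, g.comm_lu_E01,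
    g.comm_lv_E01, g.comm_lw_E01⟩

end G2Gens
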